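/- For the Korobov-kernel approximation problem, if g_k = 1 for all k, then the problem suffers from the curse of dimensionality. -/

import Mathlib

open Filter Real Set

/-- Information complexity: the number of multi-indices `(j₁,…,j_d) ∈ ℕ^d`
(here 0-indexed, so `Λ k j` stands for `λ(k+1, j+1)`) whose eigenvalue product exceeds `ε²`. -/
noncomputable def infoCount (Λ : ℕ → ℕ → ℝ) (d : ℕ) (ε : ℝ) : ℕ :=
  Nat.card {j : Fin d → ℕ | ε ^ 2 < ∏ k : Fin d, Λ k.val (j k)}

/-- Strong polynomial tractability. -/
def IsSPT (Λ : ℕ → ℕ → ℝ) : Prop :=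
  ∃ C p : ℝ, 0 ≤ C ∧ 0 ≤ p ∧ ∀ d : ℕ, 1 ≤ d → ∀ ε : ℝ, ε ∈ Set.Ioo (0 : ℝ) 1 →
    (infoCount Λ d ε : ℝ) ≤ C * ε ^ (-p)

/-- The exponent `p*` of strong polynomial tractability. -/
noncomputable def sptExponent (Λ : ℕ → ℕ → ℝ) : ℝ :=
  sInf {p : ℝ | 0 ≤ p ∧ ∃ C : ℝ, 0 ≤ C ∧ ∀ d : ℕ, 1 ≤ d → ∀ ε : ℝ, ε ∈ Set.Ioo (0 : ℝ) 1 →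
    (infoCount Λ d ε : ℝ) ≤ C * ε ^ (-p)}

/-- Polynomial tractability. -/
def IsPT (Λ : ℕ → ℕ → ℝ) : Prop :=
  ∃ C p q : ℝ, 0 ≤ C ∧ 0 ≤ p ∧ 0 ≤ q ∧ ∀ d : ℕ, 1 ≤ d → ∀ ε : ℝ, ε ∈ Set.Ioo (0 : ℝ) 1 →
    (infoCount Λ d ε : ℝ) ≤ C * (d : ℝ) ^ q * ε ^ (-p)

/-- Quasi-polynomial tractability. -/
def IsQPT (Λ : ℕ → ℕ → ℝ) : Prop :=
  ∃ C t : ℝ, 0 < C ∧ 0 < t ∧ ∀ d : ℕ, 1 ≤ d → ∀ ε : ℝ, ε ∈ Set.Ioo (0 : ℝ) 1 →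
    (infoCount Λ d ε : ℝ) ≤ C * Real.exp (t * (1 + Real.log d) * (1 + Real.log ε⁻¹))

/-- The exponent `t*` of quasi-polynomial tractability. -/
noncomputable def qptExponent (Λ : ℕ → ℕ → ℝ) : ℝ :=
  sInf {t : ℝ | 0 < t ∧ ∃ C : ℝ, 0 < C ∧ ∀ d : ℕ, 1 ≤ d → ∀ ε : ℝ, ε ∈ Set.Ioo (0 : ℝ) 1 →
    (infoCount Λ d ε : ℝ) ≤ C * Real.exp (t * (1 + Real.log d) * (1 + Real.log ε⁻¹))}

/-- The filter describing `ε⁻¹ + d → ∞` over pairs `(ε, d)` with `ε ∈ (0,1)` and `d ≥ 1`. -/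
noncomputable def wtFilter : Filter (ℝ × ℕ) :=
  (Filter.comap (fun p : ℝ × ℕ => p.1⁻¹ + (p.2 : ℝ)) Filter.atTop) ⊓
    Filter.principal {p : ℝ × ℕ | p.1 ∈ Set.Ioo (0 : ℝ) 1 ∧ 1 ≤ p.2}

/-- `(s,t)`-weak tractability: `ln n(ε,d) / (ε^{-s} + d^t) → 0` as `ε⁻¹ + d → ∞`. -/
def IsWT (Λ : ℕ → ℕ → ℝ) (s t : ℝ) : Prop :=
  Filter.Tendsto
    (fun p : ℝ × ℕ => Real.log (infoCount Λ p.2 p.1) / (p.1 ^ (-s) + (p.2 : ℝ) ^ t))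
    wtFilter (nhds 0)

/-- Uniform weak tractability. -/
def IsUWT (Λ : ℕ → ℕ → ℝ) : Prop := ∀ s t : ℝ, 0 < s → 0 < t → IsWT Λ s t

/-- The problem suffers from the curse of dimensionality. -/
def SuffersCurse (Λ : ℕ → ℕ → ℝ) : Prop :=
  ∃ C ε₀ α : ℝ, 0 < C ∧ 0 < ε₀ ∧ 0 < α ∧ ∀ ε : ℝ, 0 < ε → ε ≤ ε₀ →
    {d : ℕ | C * (1 + α) ^ d ≤ (infoCount Λ d ε : ℝ)}.Infinite

/-- Condition (3) of Property (P) for a given `τ > 0`: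
`H(k,τ) = ∑_{j≥2} (λ(k,j)/λ(k,2))^τ` is finite for each `k` and
`sup_k H(k,τ) = H(1,τ)` (equivalently `H(k,τ) ≤ H(1,τ)` for all `k`). -/
def Cond3 (Λ : ℕ → ℕ → ℝ) (τ : ℝ) : Prop :=
  0 < τ ∧ (∀ k, Summable fun j : ℕ => (Λ k (j + 1) / Λ k 1) ^ τ) ∧
    ∀ k, (∑' j : ℕ, (Λ k (j + 1) / Λ k 1) ^ τ) ≤ ∑' j : ℕ, (Λ 0 (j + 1) / Λ 0 1) ^ τ

/-- `τ₀`: the infimum of all `τ` satisfying Condition (3). -/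
noncomputable def tau0 (Λ : ℕ → ℕ → ℝ) : ℝ := sInf {τ : ℝ | Cond3 Λ τ}

/-- Property (P): each sequence `λ(k,·)` is nonincreasing and nonnegative with `λ(k,1) = 1`
and `λ(k,2) > 0`, `h_k = λ(k,2)` is nonincreasing, and Condition (3) holds for some `τ > 0`. -/
structure PropertyP (Λ : ℕ → ℕ → ℝ) : Prop where
  nonneg : ∀ k j, 0 ≤ Λ k j
  anti : ∀ k, Antitone (Λ k)
  first : ∀ k, Λ k 0 = 1
  second_pos : ∀ k, 0 < Λ k 1
  h_anti : Antitone fun k => Λ k 1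
  cond3 : ∃ τ : ℝ, Cond3 Λ τ


/-- Eigenvalues of the Korobov-kernel problem: `λ(k,1) = 1` and
`λ(k,2j) = λ(k,2j+1) = g_k j^{-2r_k}` for `j ≥ 1`
(0-indexed in both variables: `korobovLam g r k j = λ(k+1, j+1)`). -/
noncomputable def korobovLam (g r : ℕ → ℝ) (k j : ℕ) : ℝ :=
  if j = 0 then 1 else g k * (((j + 1) / 2 : ℕ) : ℝ) ^ (-(2 * r k))


lemma korobovLam_nonneg (g r : ℕ → ℝ) (hgpos : ∀ k, 0 < g k) (k j : ℕ) :
    0 ≤ korobovLam g r k j := by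
  unfold korobovLam
  split
  · norm_num
  · exact mul_nonneg (hgpos k).le (Real.rpow_nonneg (Nat.cast_nonneg _) _)

lemma half_ge_one {j : ℕ} (hj : j ≠ 0) : (1 : ℝ) ≤ (((j + 1) / 2 : ℕ) : ℝ) := by
  have : 1 ≤ (j + 1) / 2 := Nat.one_le_div_iff (by norm_num) |>.mpr (by omega)
  exact_mod_cast this

lemma korobovLam_le_one (g r : ℕ → ℝ) (hgone : ∀ k, g k = 1) (hr0 : 0 < r 0)
    (hrmono : Monotone r) (k j : ℕ) : korobovLam g r k j ≤ 1 := by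
  unfold korobovLam
  split
  · exact le_refl 1
  · rename_i hj
    rw [hgone k, one_mul]
    refine Real.rpow_le_one_of_one_le_of_nonpos (half_ge_one hj) ?_
    have : 0 < r k := lt_of_lt_of_le hr0 (hrmono (Nat.zero_le k))
    linarith

lemma korobovLam_small_eq_one (g r : ℕ → ℝ) (hgone : ∀ k, g k = 1) (k j : ℕ)
    (hj : j < 3) : korobovLam g r k j = 1 := by
  interval_cases j <;> simp [korobovLam, hgone k]

/-- For each `k`, only finitely many `j` have eigenvalue exceeding `c > 0`. -/
lemma korobovLam_finite (g r : ℕ → ℝ) (hgone : ∀ k, g k = 1) (hr0 : 0 < r 0)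
    (hrmono : Monotone r) (k : ℕ) {c : ℝ} (hc : 0 < c) :
    {j : ℕ | c < korobovLam g r k j}.Finite := by
  have hrk : 0 < 2 * r k := by
    have : 0 < r k := lt_of_lt_of_le hr0 (hrmono (Nat.zero_le k))
    linarith
  have h1 : Filter.Tendsto (fun j : ℕ => (j + 1) / 2) Filter.atTop Filter.atTop := by
    rw [Filter.tendsto_atTop_atTop]
    intro b
    exact ⟨2 * b, fun j hj => by omega⟩
  have h2 : Filter.Tendsto (fun j : ℕ => (((j + 1) / 2 : ℕ) : ℝ) ^ (-(2 * r k)))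
      Filter.atTop (nhds 0) :=
    (tendsto_rpow_neg_atTop hrk).comp (tendsto_natCast_atTop_atTop.comp h1)
  have h3 : ∀ᶠ j : ℕ in Filter.atTop,
      (((j + 1) / 2 : ℕ) : ℝ) ^ (-(2 * r k)) < c := h2.eventually_lt_const hc
  obtain ⟨N, hN⟩ := Filter.eventually_atTop.mp h3
  refine Set.Finite.subset (Set.finite_Iio (N + 1)) ?_
  intro j hj
  by_contra hjN
  have hjN' : N ≤ j := by
    have : N + 1 ≤ j := by simpa [Set.mem_Iio] using hjN
    omega
  have hj0 : j ≠ 0 := by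
    intro h; subst h
    exact hjN (Set.mem_Iio.mpr (by omega))
  have : korobovLam g r k j = (((j + 1) / 2 : ℕ) : ℝ) ^ (-(2 * r k)) := by
    simp [korobovLam, hj0, hgone k]
  rw [Set.mem_setOf_eq, this] at hj
  exact absurd (hN j hjN') (not_lt.mpr hj.le)

/-- Korobov kernels: if `g_k = 1` for all `k`, the problem suffers from the
curse of dimensionality. -/
theorem korobov_curse (g r : ℕ → ℝ) (hg1 : g 0 ≤ 1) (hganti : Antitone g)
    (hgpos : ∀ k, 0 < g k) (hr0 : 0 < r 0) (hrmono : Monotone r)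
    (hgone : ∀ k : ℕ, g k = 1) :
    SuffersCurse (korobovLam g r) := by
  refine ⟨1, 1/2, 2, one_pos, by norm_num, by norm_num, ?_⟩
  intro ε hε hε12
  have hε2 : ε ^ 2 < 1 := by nlinarith
  have hε2pos : 0 < ε ^ 2 := by positivity
  -- every d satisfies the bound
  have key : ∀ d : ℕ, (1 : ℝ) * (1 + 2) ^ d ≤ (infoCount (korobovLam g r) d ε : ℝ) := by
    intro d
    have hfin : {j : Fin d → ℕ | ε ^ 2 < ∏ k : Fin d, korobovLam g r k.val (j k)}.Finite := by
      refine Set.Finite.subset (Set.Finite.pi (fun k : Fin d =>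
        korobovLam_finite g r hgone hr0 hrmono k.val hε2pos)) ?_
      intro f hf
      rw [Set.mem_setOf_eq] at hf
      intro k _
      -- product ≤ single factor
      have hprod : ∏ i : Fin d, korobovLam g r i.val (f i)
          ≤ korobovLam g r k.val (f k) := by
        rw [← Finset.mul_prod_erase Finset.univ _ (Finset.mem_univ k)]
        have h1 : ∏ i ∈ Finset.univ.erase k, korobovLam g r i.val (f i) ≤ 1 :=
          Finset.prod_le_one (fun i _ => korobovLam_nonneg g r hgpos _ _)
            (fun i _ => korobovLam_le_one g r hgone hr0 hrmono _ _)
        exact mul_le_of_le_one_right (korobovLam_nonneg g r hgpos _ _) h1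
      exact lt_of_lt_of_le hf hprod
    haveI := hfin.to_subtype
    have hinj : Function.Injective (fun v : Fin d → Fin 3 =>
        (⟨fun k => (v k : ℕ), by
          rw [Set.mem_setOf_eq]
          have : ∀ k : Fin d, korobovLam g r k.val ((v k : ℕ)) = 1 := fun k =>
            korobovLam_small_eq_one g r hgone _ _ (v k).isLt
          simp only [this, Finset.prod_const_one]
          exact hε2⟩ :
          {j : Fin d → ℕ | ε ^ 2 < ∏ k : Fin d, korobovLam g r k.val (j k)})) := by
      intro v w h
      funext k
      have := congrArg (fun x => (x : Fin d → ℕ) k) (Subtype.ext_iff.mp h)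
      exact Fin.ext this
    have hcard := Nat.card_le_card_of_injective _ hinj
    have h3d : Nat.card (Fin d → Fin 3) = 3 ^ d := by
      simp [Nat.card_eq_fintype_card]
    rw [h3d] at hcard
    have : (3 : ℝ) ^ d ≤ (infoCount (korobovLam g r) d ε : ℝ) := by
      unfold infoCount
      exact_mod_cast hcard
    calc (1:ℝ) * (1+2)^d = 3^d := by norm_num
    _ ≤ _ := this
  refine Set.infinite_of_injective_forall_mem (f := fun n : ℕ => n)
    (fun a b h => h) (fun d => ?_)
  exact key d
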